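/- Let q ≥ 2 be an integer and p an integer, and let H(q) = {a ∈ Z/q : for every prime ℓ | q, v_ℓ((p+1−a)²−4p) = v_ℓ(q) − 1}. Then |H(q)| ≤ √(q·rad(q)), where rad(q) is the radical (product of distinct prime divisors) of q. -/

import Mathlib

open Finset

private def vv (ℓ : ℕ) (n : ℤ) : ℕ := n.natAbs.factorization ℓ

private lemma pow_dvd_iff_le_vv {ℓ : ℕ} (hℓ : ℓ.Prime) {n : ℤ} (hn : n ≠ 0) {k : ℕ} :
    (ℓ : ℤ) ^ k ∣ n ↔ k ≤ vv ℓ n := by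
  rw [vv, ← Nat.Prime.pow_dvd_iff_le_factorization hℓ (Int.natAbs_ne_zero.mpr hn),
    ← Int.natAbs_dvd_natAbs]
  simp [Int.natAbs_pow]

private lemma vv_mul {ℓ : ℕ} {a b : ℤ} (ha : a ≠ 0) (hb : b ≠ 0) :
    vv ℓ (a * b) = vv ℓ a + vv ℓ b := by
  unfold vv
  rw [Int.natAbs_mul, Nat.factorization_mul (Int.natAbs_ne_zero.mpr ha)
    (Int.natAbs_ne_zero.mpr hb)]
  simp

private lemma pairing {ℓ : ℕ} (hℓ : ℓ.Prime) (A B : ℤ) (r w : ℕ)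
    (hdvd : (ℓ : ℤ) ^ r ∣ A * B) (h2 : ¬ (ℓ : ℤ) ^ (w + 1) ∣ A + B) :
    (ℓ : ℤ) ^ (r - w) ∣ A ∨ (ℓ : ℤ) ^ (r - w) ∣ B := by
  by_contra h
  push_neg at h
  obtain ⟨hA, hB⟩ := h
  have hA0 : A ≠ 0 := by rintro rfl; exact hA (dvd_zero _)
  have hB0 : B ≠ 0 := by rintro rfl; exact hB (dvd_zero _)
  have hvA : ¬ (r - w ≤ vv ℓ A) := fun h' => hA ((pow_dvd_iff_le_vv hℓ hA0).mpr h')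
  have hvB : ¬ (r - w ≤ vv ℓ B) := fun h' => hB ((pow_dvd_iff_le_vv hℓ hB0).mpr h')
  have hAB : r ≤ vv ℓ (A * B) := (pow_dvd_iff_le_vv hℓ (mul_ne_zero hA0 hB0)).mp hdvd
  rw [vv_mul hA0 hB0] at hAB
  have h1 : w + 1 ≤ vv ℓ A := by omega
  have h2' : w + 1 ≤ vv ℓ B := by omega
  exact h2 (dvd_add ((pow_dvd_iff_le_vv hℓ hA0).mpr h1) ((pow_dvd_iff_le_vv hℓ hB0).mpr h2'))

private lemma count_class (d n : ℕ) (hd : 0 < d) (z : ℤ) :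
    ((range (d * n)).filter (fun x : ℕ => (d : ℤ) ∣ ((x : ℤ) - z))).card ≤ n := by
  have hmem : ∀ a ∈ (range (d * n)).filter (fun x : ℕ => (d : ℤ) ∣ ((x : ℤ) - z)),
      a / d ∈ range n := by
    intro x hx
    simp only [mem_filter, mem_range] at hx
    exact mem_range.mpr (Nat.div_lt_of_lt_mul hx.1)
  have hinj : Set.InjOn (fun x => x / d)
      ↑((range (d * n)).filter (fun x : ℕ => (d : ℤ) ∣ ((x : ℤ) - z))) := by
    intro x hx y hy hxy
    simp only [coe_filter, Set.mem_setOf_eq, mem_range] at hx hy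
    have hdxy : (d : ℤ) ∣ (y : ℤ) - (x : ℤ) := by
      have := dvd_sub hy.2 hx.2
      simpa using this
    have hmod : x % d = y % d := Nat.modEq_iff_dvd.mpr hdxy
    have h1 := Nat.div_add_mod x d
    have h2 := Nat.div_add_mod y d
    have hmul : d * (x / d) = d * (y / d) := by
      simp only at hxy; rw [hxy]
    omega
  calc ((range (d * n)).filter (fun x : ℕ => (d : ℤ) ∣ ((x : ℤ) - z))).card
      ≤ (range n).card := Finset.card_le_card_of_injOn _ hmem hinj
    _ = n := card_range n

private def Dp (p : ℤ) (a : ℕ) : ℤ := (p + 1 - (a : ℤ)) ^ 2 - 4 * p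

private def Ff (p : ℤ) (ℓ r : ℕ) : Finset ℕ :=
  (range (ℓ ^ r)).filter (fun a => (ℓ : ℤ) ^ (r - 1) ∣ Dp p a ∧ ¬ (ℓ : ℤ) ^ r ∣ Dp p a)

private lemma local_bound (p : ℤ) (ℓ : ℕ) (hℓ : ℓ.Prime) (r : ℕ) (hr : 1 ≤ r) :
    (Ff p ℓ r).card ^ 2 ≤ ℓ ^ (r + 1) := by
  have hℓ0 : (ℓ : ℤ) ≠ 0 := by exact_mod_cast hℓ.pos.ne'
  have hℓ1 : 1 ≤ ℓ := hℓ.pos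
  have hr1 : (ℓ : ℤ) ^ (r - 1) * ℓ = (ℓ : ℤ) ^ r := by
    rw [← pow_succ]; congr 1; omega
  -- generic class counting
  have hclass : ∀ k : ℕ, k ≤ r → ∀ z : ℤ,
      ((range (ℓ ^ r)).filter (fun x : ℕ => (ℓ : ℤ) ^ k ∣ ((x : ℤ) - z))).card ≤ ℓ ^ (r - k) := by
    intro k hk z
    have h := count_class (ℓ ^ k) (ℓ ^ (r - k)) (pow_pos hℓ.pos k) z
    rw [← pow_add, (by omega : k + (r - k) = r)] at h
    simpa using h
  rcases eq_or_lt_of_le hr with hr1' | hr2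
  · -- r = 1
    subst hr1'
    have h1 : (Ff p ℓ 1).card ≤ ℓ := by
      have := Finset.card_filter_le (range (ℓ ^ 1))
        (fun a => (ℓ : ℤ) ^ (1 - 1) ∣ Dp p a ∧ ¬ (ℓ : ℤ) ^ 1 ∣ Dp p a)
      simpa [Ff] using this
    calc (Ff p ℓ 1).card ^ 2 ≤ ℓ ^ 2 := Nat.pow_le_pow_left h1 2
      _ = ℓ ^ (1 + 1) := rfl
  have hr2 : 2 ≤ r := hr2
  by_cases hc : (ℓ : ℤ) ^ (r - 1) ∣ 4 * p
  · -- Case A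
    have hkey : ∀ a ∈ Ff p ℓ r, (ℓ : ℤ) ^ (r / 2) ∣ ((a : ℤ) - (p + 1)) := by
      intro a ha
      obtain ⟨h1, h2⟩ := (Finset.mem_filter.mp ha).2
      have hx2 : (ℓ : ℤ) ^ (r - 1) ∣ (p + 1 - (a : ℤ)) ^ 2 := by
        have := dvd_add h1 hc
        simpa [Dp] using this
      have hX : (ℓ : ℤ) ^ (r / 2) ∣ (p + 1 - (a : ℤ)) := by
        by_cases hx0 : (p + 1 - (a : ℤ)) = 0
        · rw [hx0]; exact dvd_zero _
        · have hsq : (p + 1 - (a : ℤ)) ^ 2 ≠ 0 := pow_ne_zero _ hx0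
          have hv : r - 1 ≤ vv ℓ ((p + 1 - (a : ℤ)) ^ 2) := (pow_dvd_iff_le_vv hℓ hsq).mp hx2
          rw [pow_two, vv_mul hx0 hx0] at hv
          exact (pow_dvd_iff_le_vv hℓ hx0).mpr (by omega)
      have heq : (a : ℤ) - (p + 1) = -(p + 1 - (a : ℤ)) := by ring
      rw [heq]; exact dvd_neg.mpr hX
    have hsub : Ff p ℓ r ⊆ (range (ℓ ^ r)).filter
        (fun x : ℕ => (ℓ : ℤ) ^ (r / 2) ∣ ((x : ℤ) - (p + 1))) := by
      intro a ha
      exact Finset.mem_filter.mpr ⟨(Finset.mem_filter.mp ha).1, hkey a ha⟩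
    have hcard : (Ff p ℓ r).card ≤ ℓ ^ (r - r / 2) :=
      le_trans (Finset.card_le_card hsub) (hclass _ (by omega) _)
    calc (Ff p ℓ r).card ^ 2 ≤ (ℓ ^ (r - r / 2)) ^ 2 := Nat.pow_le_pow_left hcard 2
      _ = ℓ ^ ((r - r / 2) * 2) := (pow_mul ℓ _ 2).symm
      _ ≤ ℓ ^ (r + 1) := Nat.pow_le_pow_right hℓ.pos (by omega)
  · -- Case B
    have hc0 : (4 * p : ℤ) ≠ 0 := fun h => hc (h ▸ dvd_zero _)
    set t := vv ℓ (4 * p) with ht_def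
    have ht : t ≤ r - 2 := by
      have h' : ¬ (r - 1 ≤ t) := fun h => hc ((pow_dvd_iff_le_vv hℓ hc0).mpr h)
      omega
    have hval : ∀ a ∈ Ff p ℓ r, (p + 1 - (a : ℤ)) ≠ 0 ∧ vv ℓ ((p + 1 - (a : ℤ)) ^ 2) = t := by
      intro a ha
      obtain ⟨h1, h2⟩ := (Finset.mem_filter.mp ha).2
      simp only [Dp] at h1 h2
      have hx0 : (p + 1 - (a : ℤ)) ≠ 0 := by
        rintro h
        rw [h] at h1
        apply hc
        have : (ℓ : ℤ) ^ (r - 1) ∣ -(4 * p) := by simpa using h1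
        exact dvd_neg.mp this
      refine ⟨hx0, ?_⟩
      have hsq : (p + 1 - (a : ℤ)) ^ 2 ≠ 0 := pow_ne_zero _ hx0
      by_contra hne
      have hfne : (p + 1 - (a : ℤ)) ^ 2 - 4 * p ≠ 0 :=
        sub_ne_zero.mpr (fun h => hne (by rw [h]))
      have h1' : r - 1 ≤ vv ℓ ((p + 1 - (a : ℤ)) ^ 2 - 4 * p) := (pow_dvd_iff_le_vv hℓ hfne).mp h1
      rcases lt_or_gt_of_ne hne with hlt | hgt
      · have hub : ¬ (vv ℓ ((p + 1 - (a : ℤ)) ^ 2) + 1 ≤ vv ℓ ((p + 1 - (a : ℤ)) ^ 2 - 4 * p)) := by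
          intro hle
          have hd1 := (pow_dvd_iff_le_vv hℓ hfne).mpr hle
          have hd2 : (ℓ : ℤ) ^ (vv ℓ ((p + 1 - (a : ℤ)) ^ 2) + 1) ∣ 4 * p :=
            (pow_dvd_iff_le_vv hℓ hc0).mpr (by omega)
          have hd3 : (ℓ : ℤ) ^ (vv ℓ ((p + 1 - (a : ℤ)) ^ 2) + 1) ∣ (p + 1 - (a : ℤ)) ^ 2 := by
            have := dvd_add hd1 hd2
            simpa using this
          exact absurd ((pow_dvd_iff_le_vv hℓ hsq).mp hd3) (by omega)
        omega
      · have hub : ¬ (t + 1 ≤ vv ℓ ((p + 1 - (a : ℤ)) ^ 2 - 4 * p)) := by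
          intro hle
          have hd1 := (pow_dvd_iff_le_vv hℓ hfne).mpr hle
          have hd2 : (ℓ : ℤ) ^ (t + 1) ∣ (p + 1 - (a : ℤ)) ^ 2 :=
            (pow_dvd_iff_le_vv hℓ hsq).mpr (by omega)
          have hd3 : (ℓ : ℤ) ^ (t + 1) ∣ 4 * p := by
            have := dvd_sub hd2 hd1
            simpa using this
          exact absurd ((pow_dvd_iff_le_vv hℓ hc0).mp hd3) (by omega)
        omega
    by_cases hpar : t % 2 = 1
    · -- t odd : F empty
      have hFe : (Ff p ℓ r).card = 0 := by
        rw [Finset.card_eq_zero]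
        apply Finset.eq_empty_iff_forall_notMem.mpr
        intro a ha
        obtain ⟨hx0, hv⟩ := hval a ha
        rw [pow_two, vv_mul hx0 hx0] at hv
        omega
      rw [hFe]
      positivity
    obtain ⟨s, hs⟩ : ∃ s, t = 2 * s := ⟨t / 2, by omega⟩
    have hvs : ∀ a ∈ Ff p ℓ r,
        (ℓ : ℤ) ^ s ∣ (p + 1 - (a : ℤ)) ∧ ¬ (ℓ : ℤ) ^ (s + 1) ∣ (p + 1 - (a : ℤ)) := by
      intro a ha
      obtain ⟨hx0, hv⟩ := hval a ha
      rw [pow_two, vv_mul hx0 hx0] at hv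
      constructor
      · exact (pow_dvd_iff_le_vv hℓ hx0).mpr (by omega)
      · intro h
        exact absurd ((pow_dvd_iff_le_vv hℓ hx0).mp h) (by omega)
    rcases (Ff p ℓ r).eq_empty_or_nonempty with hFe | hFn
    · rw [hFe]; simp
    obtain ⟨a₀, ha₀⟩ := hFn
    -- u values
    have hu : ∀ a ∈ Ff p ℓ r,
        (ℓ : ℤ) ^ (r - 1) * (((p + 1 - (a : ℤ)) ^ 2 - 4 * p) / (ℓ : ℤ) ^ (r - 1))
          = (p + 1 - (a : ℤ)) ^ 2 - 4 * p := by
      intro a ha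
      exact Int.mul_ediv_cancel' (by simpa [Dp] using (Finset.mem_filter.mp ha).2.1)
    have hodd : ∀ a ∈ Ff p ℓ r,
        ¬ (ℓ : ℤ) ∣ (((p + 1 - (a : ℤ)) ^ 2 - 4 * p) / (ℓ : ℤ) ^ (r - 1)) := by
      intro a ha hdvd
      obtain ⟨w, hw⟩ := hdvd
      have h2 : ¬ (ℓ : ℤ) ^ r ∣ ((p + 1 - (a : ℤ)) ^ 2 - 4 * p) := by
        simpa [Dp] using (Finset.mem_filter.mp ha).2.2
      apply h2
      refine ⟨w, ?_⟩
      calc (p + 1 - (a : ℤ)) ^ 2 - 4 * p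
          = (ℓ : ℤ) ^ (r - 1) * (((p + 1 - (a : ℤ)) ^ 2 - 4 * p) / (ℓ : ℤ) ^ (r - 1)) := (hu a ha).symm
        _ = (ℓ : ℤ) ^ (r - 1) * ((ℓ : ℤ) * w) := by rw [hw]
        _ = (ℓ : ℤ) ^ r * w := by rw [← hr1]; ring
    have hsame : ∀ a ∈ Ff p ℓ r, ∀ b ∈ Ff p ℓ r,
        (ℓ : ℤ) ∣ (((p + 1 - (a : ℤ)) ^ 2 - 4 * p) / (ℓ : ℤ) ^ (r - 1))
          - (((p + 1 - (b : ℤ)) ^ 2 - 4 * p) / (ℓ : ℤ) ^ (r - 1)) →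
        (ℓ : ℤ) ^ r ∣ (p + 1 - (a : ℤ)) ^ 2 - (p + 1 - (b : ℤ)) ^ 2 := by
      intro a ha b hb hd
      obtain ⟨w, hw⟩ := hd
      refine ⟨w, ?_⟩
      calc (p + 1 - (a : ℤ)) ^ 2 - (p + 1 - (b : ℤ)) ^ 2
          = (ℓ : ℤ) ^ (r - 1) * ((((p + 1 - (a : ℤ)) ^ 2 - 4 * p) / (ℓ : ℤ) ^ (r - 1))
              - (((p + 1 - (b : ℤ)) ^ 2 - 4 * p) / (ℓ : ℤ) ^ (r - 1))) := by
            linear_combination (hu b hb) - (hu a ha)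
        _ = (ℓ : ℤ) ^ (r - 1) * ((ℓ : ℤ) * w) := by rw [hw]
        _ = (ℓ : ℤ) ^ r * w := by rw [← hr1]; ring
    have hpairing : ∀ w : ℕ, ∀ a ∈ Ff p ℓ r, ∀ b ∈ Ff p ℓ r,
        (ℓ : ℤ) ^ r ∣ (p + 1 - (a : ℤ)) ^ 2 - (p + 1 - (b : ℤ)) ^ 2 →
        ¬ (ℓ : ℤ) ^ (w + 1) ∣ 2 * (p + 1 - (a : ℤ)) →
        ((ℓ : ℤ) ^ (r - w) ∣ ((a : ℤ) - (b : ℤ)) ∨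
          (ℓ : ℤ) ^ (r - w) ∣ ((a : ℤ) - (2 * (p + 1) - (b : ℤ)))) := by
      intro w a ha b hb hdvd h2x
      have hAB : (ℓ : ℤ) ^ r ∣ ((p + 1 - (a : ℤ)) - (p + 1 - (b : ℤ)))
          * ((p + 1 - (a : ℤ)) + (p + 1 - (b : ℤ))) := by
        have heq : ((p + 1 - (a : ℤ)) - (p + 1 - (b : ℤ))) * ((p + 1 - (a : ℤ)) + (p + 1 - (b : ℤ)))
            = (p + 1 - (a : ℤ)) ^ 2 - (p + 1 - (b : ℤ)) ^ 2 := by ring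
        rw [heq]; exact hdvd
      have h2' : ¬ (ℓ : ℤ) ^ (w + 1) ∣ ((p + 1 - (a : ℤ)) - (p + 1 - (b : ℤ)))
          + ((p + 1 - (a : ℤ)) + (p + 1 - (b : ℤ))) := by
        intro h
        apply h2x
        have heq : ((p + 1 - (a : ℤ)) - (p + 1 - (b : ℤ))) + ((p + 1 - (a : ℤ)) + (p + 1 - (b : ℤ)))
            = 2 * (p + 1 - (a : ℤ)) := by ring
        rwa [heq] at h
      rcases pairing hℓ _ _ r w hAB h2' with h | h
      · left
        have heq : (a : ℤ) - b = -((p + 1 - (a : ℤ)) - (p + 1 - (b : ℤ))) := by ring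
        rw [heq]; exact dvd_neg.mpr h
      · right
        have heq : (a : ℤ) - (2 * (p + 1) - (b : ℤ))
            = -((p + 1 - (a : ℤ)) + (p + 1 - (b : ℤ))) := by ring
        rw [heq]; exact dvd_neg.mpr h
    by_cases hl2 : ℓ = 2
    · -- ℓ = 2
      have hℓ2Z : (ℓ : ℤ) = 2 := by rw [hl2]; norm_num
      have h2x : ∀ a ∈ Ff p ℓ r, ¬ (ℓ : ℤ) ^ (s + 1 + 1) ∣ 2 * (p + 1 - (a : ℤ)) := by
        intro a ha h
        apply (hvs a ha).2
        rw [← hℓ2Z] at h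
        rw [pow_succ'] at h
        exact (mul_dvd_mul_iff_left hℓ0).mp h
      have hsame2 : ∀ a ∈ Ff p ℓ r,
          (ℓ : ℤ) ^ r ∣ (p + 1 - (a : ℤ)) ^ 2 - (p + 1 - (a₀ : ℤ)) ^ 2 := by
        intro a ha
        apply hsame a ha a₀ ha₀
        have h1 := hodd a ha
        have h2 := hodd a₀ ha₀
        rw [hℓ2Z] at h1 h2 ⊢
        omega
      have hpair2 : ∀ a ∈ Ff p ℓ r,
          (ℓ : ℤ) ^ (r - (s + 1)) ∣ ((a : ℤ) - (a₀ : ℤ)) ∨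
          (ℓ : ℤ) ^ (r - (s + 1)) ∣ ((a : ℤ) - (2 * (p + 1) - (a₀ : ℤ))) :=
        fun a ha => hpairing (s + 1) a ha a₀ ha₀ (hsame2 a ha) (h2x a ha)
      by_cases hedge : 2 * s = r - 2
      · -- single class
        have hsingle : ∀ a ∈ Ff p ℓ r, (ℓ : ℤ) ^ (r - (s + 1)) ∣ ((a : ℤ) - (a₀ : ℤ)) := by
          intro a ha
          rcases hpair2 a ha with h | h
          · exact h
          · have hk : r - (s + 1) = s + 1 := by omega
            have hd0 : (ℓ : ℤ) ^ (r - (s + 1)) ∣ 2 * (p + 1 - (a₀ : ℤ)) := by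
              rw [hk, pow_succ', hℓ2Z]
              have := (hvs a₀ ha₀).1
              rw [hℓ2Z] at this
              exact mul_dvd_mul_left 2 this
            have heq : (a : ℤ) - (a₀ : ℤ)
                = ((a : ℤ) - (2 * (p + 1) - (a₀ : ℤ))) + 2 * (p + 1 - (a₀ : ℤ)) := by ring
            rw [heq]; exact dvd_add h hd0
        have hsub : Ff p ℓ r ⊆ (range (ℓ ^ r)).filter
            (fun x : ℕ => (ℓ : ℤ) ^ (r - (s + 1)) ∣ ((x : ℤ) - (a₀ : ℤ))) := by
          intro a ha
          exact Finset.mem_filter.mpr ⟨(Finset.mem_filter.mp ha).1, hsingle a ha⟩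
        have hcard : (Ff p ℓ r).card ≤ ℓ ^ (s + 1) := by
          have h := hclass (r - (s + 1)) (by omega) (a₀ : ℤ)
          rw [(by omega : r - (r - (s + 1)) = s + 1)] at h
          exact le_trans (Finset.card_le_card hsub) h
        calc (Ff p ℓ r).card ^ 2 ≤ (ℓ ^ (s + 1)) ^ 2 := Nat.pow_le_pow_left hcard 2
          _ = ℓ ^ ((s + 1) * 2) := (pow_mul ℓ _ 2).symm
          _ ≤ ℓ ^ (r + 1) := Nat.pow_le_pow_right hℓ.pos (by omega)
      · -- two classes
        have hsub : Ff p ℓ r ⊆ ((range (ℓ ^ r)).filter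
            (fun x : ℕ => (ℓ : ℤ) ^ (r - (s + 1)) ∣ ((x : ℤ) - (a₀ : ℤ)))) ∪
            ((range (ℓ ^ r)).filter
            (fun x : ℕ => (ℓ : ℤ) ^ (r - (s + 1)) ∣ ((x : ℤ) - (2 * (p + 1) - (a₀ : ℤ))))) := by
          intro a ha
          rw [Finset.mem_union, Finset.mem_filter, Finset.mem_filter]
          rcases hpair2 a ha with h | h
          · exact Or.inl ⟨(Finset.mem_filter.mp ha).1, h⟩
          · exact Or.inr ⟨(Finset.mem_filter.mp ha).1, h⟩
        have hcard : (Ff p ℓ r).card ≤ ℓ ^ (s + 1) + ℓ ^ (s + 1) := by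
          have h1 := hclass (r - (s + 1)) (by omega) (a₀ : ℤ)
          have h2 := hclass (r - (s + 1)) (by omega) (2 * (p + 1) - (a₀ : ℤ))
          rw [(by omega : r - (r - (s + 1)) = s + 1)] at h1 h2
          refine le_trans (Finset.card_le_card hsub) (le_trans (Finset.card_union_le _ _) ?_)
          omega
        have hcard2 : (Ff p ℓ r).card ≤ ℓ ^ (s + 2) := by
          have hp2 : ℓ ^ (s + 2) = ℓ ^ (s + 1) * ℓ := pow_succ ℓ (s + 1)
          have hl2' : 2 ≤ ℓ := hℓ.two_le
          have hz : ℓ ^ (s + 1) + ℓ ^ (s + 1) ≤ ℓ ^ (s + 2) := by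
            rw [hp2]
            nlinarith [Nat.one_le_two_pow (n := s), pow_pos hℓ.pos (s + 1)]
          omega
        calc (Ff p ℓ r).card ^ 2 ≤ (ℓ ^ (s + 2)) ^ 2 := Nat.pow_le_pow_left hcard2 2
          _ = ℓ ^ ((s + 2) * 2) := (pow_mul ℓ _ 2).symm
          _ ≤ ℓ ^ (r + 1) := Nat.pow_le_pow_right hℓ.pos (by omega)
    · -- ℓ odd
      have hl3 : 3 ≤ ℓ := by
        have := hℓ.two_le
        rcases Nat.lt_or_ge ℓ 3 with h | h
        · interval_cases ℓ <;> simp_all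
        · exact h
      have hcop : ∀ a ∈ Ff p ℓ r, ¬ (ℓ : ℤ) ^ (s + 1) ∣ 2 * (p + 1 - (a : ℤ)) := by
        intro a ha h
        apply (hvs a ha).2
        have hco : IsCoprime ((ℓ : ℤ) ^ (s + 1)) (2 : ℤ) := by
          have hn : Nat.Coprime (ℓ ^ (s + 1)) 2 :=
            Nat.Coprime.pow_left _ ((Nat.coprime_primes hℓ Nat.prime_two).mpr hl2)
          have := Nat.isCoprime_iff_coprime.mpr hn
          push_cast at this
          exact this
        exact hco.dvd_of_dvd_mul_left h
      -- fibers
      have hφmem : ∀ a ∈ Ff p ℓ r,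
          ((((p + 1 - (a : ℤ)) ^ 2 - 4 * p) / (ℓ : ℤ) ^ (r - 1)) % (ℓ : ℤ)).toNat
            ∈ (range ℓ).erase 0 := by
        intro a ha
        have hnn : 0 ≤ (((p + 1 - (a : ℤ)) ^ 2 - 4 * p) / (ℓ : ℤ) ^ (r - 1)) % (ℓ : ℤ) :=
          Int.emod_nonneg _ hℓ0
        have hlt : (((p + 1 - (a : ℤ)) ^ 2 - 4 * p) / (ℓ : ℤ) ^ (r - 1)) % (ℓ : ℤ) < (ℓ : ℤ) :=
          Int.emod_lt_of_pos _ (by exact_mod_cast hℓ.pos)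
        rw [Finset.mem_erase, Finset.mem_range]
        constructor
        · intro h0
          apply hodd a ha
          apply Int.dvd_of_emod_eq_zero
          omega
        · omega
      have hcardsum := Finset.card_eq_sum_card_fiberwise hφmem
      have hfib : ∀ j ∈ (range ℓ).erase 0,
          ((Ff p ℓ r).filter (fun a =>
            ((((p + 1 - (a : ℤ)) ^ 2 - 4 * p) / (ℓ : ℤ) ^ (r - 1)) % (ℓ : ℤ)).toNat = j)).card
            ≤ 2 * ℓ ^ s := by
        intro j hj
        set G := (Ff p ℓ r).filter (fun a =>
            ((((p + 1 - (a : ℤ)) ^ 2 - 4 * p) / (ℓ : ℤ) ^ (r - 1)) % (ℓ : ℤ)).toNat = j) with hG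
        rcases G.eq_empty_or_nonempty with he | hn
        · rw [he]; simp
        obtain ⟨b₀, hb₀⟩ := hn
        have hb₀F : b₀ ∈ Ff p ℓ r := (Finset.mem_filter.mp hb₀).1
        have hsamej : ∀ a ∈ G, (ℓ : ℤ) ^ r ∣ (p + 1 - (a : ℤ)) ^ 2 - (p + 1 - (b₀ : ℤ)) ^ 2 := by
          intro a haj
          have haF := (Finset.mem_filter.mp haj).1
          apply hsame a haF b₀ hb₀F
          have h1 : ((((p + 1 - (a : ℤ)) ^ 2 - 4 * p) / (ℓ : ℤ) ^ (r - 1)) % (ℓ : ℤ)).toNat = j :=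
            (Finset.mem_filter.mp haj).2
          have h2 : ((((p + 1 - (b₀ : ℤ)) ^ 2 - 4 * p) / (ℓ : ℤ) ^ (r - 1)) % (ℓ : ℤ)).toNat = j :=
            (Finset.mem_filter.mp hb₀).2
          have hnna : 0 ≤ (((p + 1 - (a : ℤ)) ^ 2 - 4 * p) / (ℓ : ℤ) ^ (r - 1)) % (ℓ : ℤ) :=
            Int.emod_nonneg _ hℓ0
          have hnnb : 0 ≤ (((p + 1 - (b₀ : ℤ)) ^ 2 - 4 * p) / (ℓ : ℤ) ^ (r - 1)) % (ℓ : ℤ) :=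
            Int.emod_nonneg _ hℓ0
          have hmq : (((p + 1 - (a : ℤ)) ^ 2 - 4 * p) / (ℓ : ℤ) ^ (r - 1)) % (ℓ : ℤ)
              = (((p + 1 - (b₀ : ℤ)) ^ 2 - 4 * p) / (ℓ : ℤ) ^ (r - 1)) % (ℓ : ℤ) := by
            omega
          have := (Int.ModEq.dvd (hmq.symm : Int.ModEq (ℓ:ℤ) _ _))
          exact this
        have hpairj : ∀ a ∈ G,
            (ℓ : ℤ) ^ (r - s) ∣ ((a : ℤ) - (b₀ : ℤ)) ∨
            (ℓ : ℤ) ^ (r - s) ∣ ((a : ℤ) - (2 * (p + 1) - (b₀ : ℤ))) := by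
          intro a haj
          have haF := (Finset.mem_filter.mp haj).1
          exact hpairing s a haF b₀ hb₀F (hsamej a haj) (hcop a haF)
        have hsub : G ⊆ ((range (ℓ ^ r)).filter
            (fun x : ℕ => (ℓ : ℤ) ^ (r - s) ∣ ((x : ℤ) - (b₀ : ℤ)))) ∪
            ((range (ℓ ^ r)).filter
            (fun x : ℕ => (ℓ : ℤ) ^ (r - s) ∣ ((x : ℤ) - (2 * (p + 1) - (b₀ : ℤ))))) := by
          intro a haj
          have haF := (Finset.mem_filter.mp haj).1
          have haR := (Finset.mem_filter.mp haF).1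
          rw [Finset.mem_union, Finset.mem_filter, Finset.mem_filter]
          rcases hpairj a haj with h | h
          · exact Or.inl ⟨haR, h⟩
          · exact Or.inr ⟨haR, h⟩
        have h1 := hclass (r - s) (by omega) (b₀ : ℤ)
        have h2 := hclass (r - s) (by omega) (2 * (p + 1) - (b₀ : ℤ))
        rw [(by omega : r - (r - s) = s)] at h1 h2
        calc G.card ≤ _ := Finset.card_le_card hsub
          _ ≤ _ := Finset.card_union_le _ _
          _ ≤ 2 * ℓ ^ s := by omega
      have hFle : (Ff p ℓ r).card ≤ (ℓ - 1) * (2 * ℓ ^ s) := by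
        rw [hcardsum]
        calc ∑ j ∈ (range ℓ).erase 0, _ ≤ ∑ j ∈ (range ℓ).erase 0, 2 * ℓ ^ s :=
              Finset.sum_le_sum hfib
          _ = (ℓ - 1) * (2 * ℓ ^ s) := by
            rw [Finset.sum_const, smul_eq_mul, Finset.card_erase_of_mem
              (Finset.mem_range.mpr hℓ.pos), Finset.card_range]
      have h4 : 4 * (ℓ - 1) ^ 2 ≤ ℓ ^ 3 := by
        obtain ⟨m, rfl⟩ : ∃ m, ℓ = m + 3 := ⟨ℓ - 3, by omega⟩
        have hm : m + 3 - 1 = m + 2 := by omega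
        rw [hm]
        nlinarith [Nat.zero_le m]
      calc (Ff p ℓ r).card ^ 2 ≤ ((ℓ - 1) * (2 * ℓ ^ s)) ^ 2 := Nat.pow_le_pow_left hFle 2
        _ = 4 * (ℓ - 1) ^ 2 * (ℓ ^ s) ^ 2 := by ring
        _ = 4 * (ℓ - 1) ^ 2 * ℓ ^ (s * 2) := by rw [pow_mul]
        _ ≤ ℓ ^ 3 * ℓ ^ (r - 2) := by
          apply Nat.mul_le_mul h4
          exact Nat.pow_le_pow_right hℓ.pos (by omega)
        _ = ℓ ^ (r + 1) := by rw [← pow_add]; congr 1; omega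

theorem card_H_le_sqrt_q_rad (q : ℕ) (hq : 2 ≤ q) (p : ℤ) :
    (Set.ncard {a : ℕ | a < q ∧ ∀ ℓ : ℕ, ℓ.Prime → ℓ ∣ q →
        ((ℓ : ℤ) ^ (q.factorization ℓ - 1) ∣ ((p + 1 - (a : ℤ)) ^ 2 - 4 * p) ∧
          ¬ (ℓ : ℤ) ^ (q.factorization ℓ) ∣ ((p + 1 - (a : ℤ)) ^ 2 - 4 * p))} : ℝ) ≤
      Real.sqrt ((q : ℝ) * ∏ ℓ ∈ q.primeFactors, (ℓ : ℝ)) := by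
  classical
  have hq0 : q ≠ 0 := by omega
  have hqprod : q = ∏ ℓ ∈ q.primeFactors, ℓ ^ q.factorization ℓ := by
    conv_lhs => rw [← Nat.factorization_prod_pow_eq_self hq0]
    rw [Finsupp.prod, Nat.support_factorization]
  have hset : {a : ℕ | a < q ∧ ∀ ℓ : ℕ, ℓ.Prime → ℓ ∣ q →
        ((ℓ : ℤ) ^ (q.factorization ℓ - 1) ∣ ((p + 1 - (a : ℤ)) ^ 2 - 4 * p) ∧
          ¬ (ℓ : ℤ) ^ (q.factorization ℓ) ∣ ((p + 1 - (a : ℤ)) ^ 2 - 4 * p))}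
      = ↑((range q).filter (fun a : ℕ => ∀ ℓ : ℕ, ℓ.Prime → ℓ ∣ q →
        ((ℓ : ℤ) ^ (q.factorization ℓ - 1) ∣ ((p + 1 - (a : ℤ)) ^ 2 - 4 * p) ∧
          ¬ (ℓ : ℤ) ^ (q.factorization ℓ) ∣ ((p + 1 - (a : ℤ)) ^ 2 - 4 * p)))) := by
    ext a
    simp [Finset.mem_filter, Finset.mem_range]
  rw [hset, Set.ncard_coe_finset]
  set S := (range q).filter (fun a : ℕ => ∀ ℓ : ℕ, ℓ.Prime → ℓ ∣ q →
        ((ℓ : ℤ) ^ (q.factorization ℓ - 1) ∣ ((p + 1 - (a : ℤ)) ^ 2 - 4 * p) ∧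
          ¬ (ℓ : ℤ) ^ (q.factorization ℓ) ∣ ((p + 1 - (a : ℤ)) ^ 2 - 4 * p))) with hS
  have hinj : S.card ≤ ∏ ℓ ∈ q.primeFactors, (Ff p ℓ (q.factorization ℓ)).card := by
    rw [← Finset.card_pi]
    apply Finset.card_le_card_of_injOn
      (fun a => fun ℓ _ => a % ℓ ^ (q.factorization ℓ))
    · intro a ha
      rw [Finset.mem_coe, Finset.mem_pi]
      intro ℓ hℓpf
      have hℓp : ℓ.Prime := Nat.prime_of_mem_primeFactors hℓpf
      have hℓdvd : ℓ ∣ q := Nat.dvd_of_mem_primeFactors hℓpf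
      obtain ⟨haq, haP⟩ := Finset.mem_filter.mp ha
      obtain ⟨h1, h2⟩ := haP ℓ hℓp hℓdvd
      have hm0 : 0 < ℓ ^ (q.factorization ℓ) := pow_pos hℓp.pos _
      -- difference divisibility
      obtain ⟨w, hw⟩ := (Nat.mod_modEq a (ℓ ^ (q.factorization ℓ))).dvd
      have hdiff : ((ℓ : ℤ) ^ (q.factorization ℓ)) ∣
          ((p + 1 - ((a % ℓ ^ (q.factorization ℓ) : ℕ) : ℤ)) ^ 2 - 4 * p)
            - ((p + 1 - (a : ℤ)) ^ 2 - 4 * p) := by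
        refine ⟨w * ((p + 1 - ((a % ℓ ^ (q.factorization ℓ) : ℕ) : ℤ)) + (p + 1 - (a : ℤ))), ?_⟩
        have hmc : ((ℓ ^ (q.factorization ℓ) : ℕ) : ℤ) = (ℓ : ℤ) ^ (q.factorization ℓ) := by
          push_cast; rfl
        rw [hmc] at hw
        linear_combination ((p + 1 - ((a % ℓ ^ (q.factorization ℓ) : ℕ) : ℤ)) + (p + 1 - (a : ℤ))) * hw
      refine Finset.mem_filter.mpr ⟨Finset.mem_range.mpr (Nat.mod_lt a hm0), ?_⟩
      constructor
      · have hd : (ℓ : ℤ) ^ (q.factorization ℓ - 1) ∣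
            ((p + 1 - ((a % ℓ ^ (q.factorization ℓ) : ℕ) : ℤ)) ^ 2 - 4 * p)
              - ((p + 1 - (a : ℤ)) ^ 2 - 4 * p) :=
          dvd_trans (pow_dvd_pow _ (by omega)) hdiff
        have := dvd_add h1 hd
        simpa [Dp] using this
      · intro hcon
        apply h2
        simp only [Dp] at hcon
        have := dvd_sub hcon hdiff
        simpa using this
    · intro a ha b hb hab
      simp only [hS, Finset.coe_filter, Set.mem_setOf_eq, Finset.mem_range] at ha hb
      have hdvd : ∀ ℓ ∈ q.primeFactors, ((ℓ : ℤ) ^ (q.factorization ℓ)) ∣ (a : ℤ) - (b : ℤ) := by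
        intro ℓ hℓpf
        have heq : a % ℓ ^ (q.factorization ℓ) = b % ℓ ^ (q.factorization ℓ) :=
          congrFun (congrFun hab ℓ) hℓpf
        have hmq : ((ℓ ^ (q.factorization ℓ) : ℕ) : ℤ) ∣ (a : ℤ) - (b : ℤ) := by
          have := (Nat.modEq_iff_dvd.mp (heq : Nat.ModEq _ a b))
          have h' := dvd_neg.mpr this
          simpa using h'
        exact_mod_cast hmq
      have hqd : (q : ℤ) ∣ (a : ℤ) - (b : ℤ) := by
        have hq' : (q : ℤ) = ∏ ℓ ∈ q.primeFactors, ((ℓ : ℤ) ^ (q.factorization ℓ)) := by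
          conv_lhs => rw [hqprod]
          push_cast
          rfl
        rw [hq']
        apply Finset.prod_dvd_of_coprime
        · intro ℓ1 h1 ℓ2 h2 hne
          simp only [Function.onFun]
          apply IsCoprime.pow
          rw [Nat.isCoprime_iff_coprime]
          exact (Nat.coprime_primes (Nat.prime_of_mem_primeFactors h1)
            (Nat.prime_of_mem_primeFactors h2)).mpr hne
        · exact hdvd
      have hmod : a % q = b % q := by
        have : Nat.ModEq q a b := Nat.modEq_iff_dvd.mpr (by
          have := dvd_neg.mpr hqd
          simpa using this)
        exact this
      rwa [Nat.mod_eq_of_lt ha.1, Nat.mod_eq_of_lt hb.1] at hmod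
  have hmain : S.card ^ 2 ≤ q * ∏ ℓ ∈ q.primeFactors, ℓ := by
    calc S.card ^ 2 ≤ (∏ ℓ ∈ q.primeFactors, (Ff p ℓ (q.factorization ℓ)).card) ^ 2 :=
          Nat.pow_le_pow_left hinj 2
      _ = ∏ ℓ ∈ q.primeFactors, (Ff p ℓ (q.factorization ℓ)).card ^ 2 :=
          (Finset.prod_pow _ _ _).symm
      _ ≤ ∏ ℓ ∈ q.primeFactors, ℓ ^ (q.factorization ℓ + 1) := by
          apply Finset.prod_le_prod'
          intro ℓ hℓpf
          exact local_bound p ℓ (Nat.prime_of_mem_primeFactors hℓpf) _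
            ((Nat.prime_of_mem_primeFactors hℓpf).factorization_pos_of_dvd hq0
              (Nat.dvd_of_mem_primeFactors hℓpf))
      _ = (∏ ℓ ∈ q.primeFactors, ℓ ^ q.factorization ℓ) * ∏ ℓ ∈ q.primeFactors, ℓ := by
          rw [← Finset.prod_mul_distrib]
          exact Finset.prod_congr rfl (fun ℓ _ => pow_succ ℓ _)
      _ = q * ∏ ℓ ∈ q.primeFactors, ℓ := by rw [← hqprod]
  have hcast : ((q : ℝ) * ∏ ℓ ∈ q.primeFactors, (ℓ : ℝ))
      = (((q * ∏ ℓ ∈ q.primeFactors, ℓ : ℕ)) : ℝ) := by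
    push_cast
    ring
  rw [hcast, ← Real.sqrt_sq (Nat.cast_nonneg _ : (0:ℝ) ≤ (S.card : ℝ))]
  apply Real.sqrt_le_sqrt
  have : ((S.card ^ 2 : ℕ) : ℝ) ≤ (((q * ∏ ℓ ∈ q.primeFactors, ℓ : ℕ)) : ℝ) := by
    exact_mod_cast hmain
  calc ((S.card : ℝ)) ^ 2 = ((S.card ^ 2 : ℕ) : ℝ) := by push_cast; ring
    _ ≤ _ := this
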